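/- Any two cluster decompositions of a given multiset z admit a common coarsening: there exists a cluster decomposition z = Σ w_k such that each x_i and each y_j (clusters of the two given decompositions) is contained in some w_k. -/

import Mathlib

/-- A clustering rule: sequences of positive reals `0 < r 1 < r 2 < ...` and
`0 = d 1 < d 2 < ...` with `r k > d k + r (k-1)` and `d k > 6 * r (k-1)` for `k ≥ 2`. -/
def ClusteringRule (r d : ℕ → ℝ) : Prop :=
  0 < r 1 ∧ d 1 = 0 ∧
  (∀ k, 1 ≤ k → r k < r (k + 1)) ∧
  (∀ k, 1 ≤ k → d k < d (k + 1)) ∧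
  (∀ k, 2 ≤ k → d k + r (k - 1) < r k) ∧
  (∀ k, 2 ≤ k → 6 * r (k - 1) < d k)

noncomputable local instance myDecEqAux {M : Type*} : DecidableEq (Multiset M × M) :=
  Classical.decEq _

section Aux

variable {M : Type*} [MetricSpace M] {r d : ℕ → ℝ}

lemma ClusteringRule.r_mono (h : ClusteringRule r d) {a b : ℕ} (ha : 1 ≤ a) (hab : a ≤ b) :
    r a ≤ r b := by
  induction b, hab using Nat.le_induction with
  | base => exact le_rfl
  | succ b hb ih => exact ih.trans (le_of_lt (h.2.2.1 b (ha.trans hb)))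

lemma ClusteringRule.r_pos (h : ClusteringRule r d) {k : ℕ} (hk : 1 ≤ k) : 0 < r k :=
  h.1.trans_le (h.r_mono le_rfl hk)

/-- Confined piece with its center. -/
def Conf (r : ℕ → ℝ) (pc : Multiset M × M) : Prop :=
  pc.1 ≠ 0 ∧ ∀ q ∈ pc.1, dist q pc.2 < r (Multiset.card pc.1)

/-- Separated pair of pieces. -/
def SepPair (d : ℕ → ℝ) (a b : Multiset M × M) : Prop :=
  d (Multiset.card a.1 + Multiset.card b.1) < dist a.2 b.2

/-- Two distinct clusters of one decomposition share no point. -/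
lemma disj_lemma (h : ClusteringRule r d) {l : ℕ} (Y : Fin l → Multiset M) (cY : Fin l → M)
    (hYne : ∀ j, Y j ≠ 0)
    (hYconf : ∀ j, ∀ p ∈ Y j, dist p (cY j) < r (Y j).card)
    (hYsep : ∀ i j, i ≠ j → d ((Y i).card + (Y j).card) < dist (cY i) (cY j))
    {j j' : Fin l} (hne : j ≠ j') {p : M} (h1 : p ∈ Y j) (h2 : p ∈ Y j') : False := by
  have hn : 1 ≤ (Y j).card := Multiset.card_pos.mpr (hYne j)
  have hn' : 1 ≤ (Y j').card := Multiset.card_pos.mpr (hYne j')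
  set n := (Y j).card
  set n' := (Y j').card
  have hK1 : 1 ≤ n + n' - 1 := by omega
  have hK2 : n ≤ n + n' - 1 := by omega
  have hK3 : n' ≤ n + n' - 1 := by omega
  have hd : d (n + n') < dist (cY j) (cY j') := hYsep _ _ hne
  have h6 : 6 * r (n + n' - 1) < d (n + n') := h.2.2.2.2.2 _ (by omega)
  have tri : dist (cY j) (cY j') ≤ dist p (cY j) + dist p (cY j') :=
    dist_triangle_left _ _ _
  have c1 := hYconf j p h1
  have c2 := hYconf j' p h2
  have m1 : r n ≤ r (n + n' - 1) := h.r_mono hn hK2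
  have m2 : r n' ≤ r (n + n' - 1) := h.r_mono hn' hK3
  have hp : 0 < r (n + n' - 1) := h.r_pos hK1
  linarith

/-- Nesting: if a confined piece `x` inside `∑ Y` shares a point with `Y j` and is not
larger, then `x ≤ Y j`. -/
lemma nest_lemma (h : ClusteringRule r d) {l : ℕ} (Y : Fin l → Multiset M) (cY : Fin l → M)
    (hYne : ∀ j, Y j ≠ 0)
    (hYconf : ∀ j, ∀ p ∈ Y j, dist p (cY j) < r (Y j).card)
    (hYsep : ∀ i j, i ≠ j → d ((Y i).card + (Y j).card) < dist (cY i) (cY j))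
    (x : Multiset M) (cx : M) (hxle : x ≤ ∑ j, Y j)
    (hxconf : ∀ p ∈ x, dist p cx < r x.card)
    {j : Fin l} {p : M} (hpx : p ∈ x) (hpY : p ∈ Y j)
    (hcard : x.card ≤ (Y j).card) : x ≤ Y j := by
  classical
  rw [Multiset.le_iff_count]
  intro q
  by_cases hq : q ∈ x
  · -- q belongs only to Y j among the Y's
    have hzero : ∀ j' : Fin l, j' ≠ j → Multiset.count q (Y j') = 0 := by
      intro j' hne
      rw [Multiset.count_eq_zero]
      intro hqY'
      -- derive contradiction
      have hnx : 1 ≤ x.card := Multiset.card_pos.mpr (by rintro rfl; exact absurd hpx (by simp))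
      have hnY : 1 ≤ (Y j).card := Multiset.card_pos.mpr (hYne j)
      have hnY' : 1 ≤ (Y j').card := Multiset.card_pos.mpr (hYne j')
      set n := (Y j).card
      set n' := (Y j').card
      have hK1 : 1 ≤ n + n' - 1 := by omega
      have hcc : dist cx (cY j) ≤ dist p cx + dist p (cY j) := dist_triangle_left _ _ _
      have h1 := hxconf p hpx
      have h2 := hYconf j p hpY
      have h3 := hxconf q hq
      have h4 := hYconf j' q hqY'
      have hup : dist q (cY j) ≤ dist q cx + dist cx (cY j) := dist_triangle _ _ _
      have hlo : dist (cY j) (cY j') ≤ dist q (cY j) + dist q (cY j') :=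
        dist_triangle_left _ _ _
      have hd : d (n + n') < dist (cY j) (cY j') := hYsep _ _ (Ne.symm hne)
      have h6 : 6 * r (n + n' - 1) < d (n + n') := h.2.2.2.2.2 _ (by omega)
      have m0 : r x.card ≤ r n := h.r_mono hnx hcard
      have m1 : r n ≤ r (n + n' - 1) := h.r_mono hnY (by omega)
      have m2 : r n' ≤ r (n + n' - 1) := h.r_mono hnY' (by omega)
      have hp0 : 0 < r (n + n' - 1) := h.r_pos hK1
      linarith
    have h1 : Multiset.count q x ≤ Multiset.count q (∑ j, Y j) :=
      Multiset.le_iff_count.mp hxle q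
    rw [Multiset.count_sum'] at h1
    rwa [Finset.sum_eq_single j (fun j' _ hne => hzero j' hne) (by simp)] at h1
  · simp [Multiset.count_eq_zero.mpr hq]

/-- Merging non-separated confined pieces until the family is separated. -/
lemma merge_lemma (h : ClusteringRule r d) :
    ∀ (n : ℕ) (S : Multiset (Multiset M × M)), Multiset.card S = n →
      (∀ pc ∈ S, Conf r pc) →
      ∃ T : Multiset (Multiset M × M),
        (T.map Prod.fst).sum = (S.map Prod.fst).sum ∧
        (∀ pc ∈ T, Conf r pc) ∧
        (∀ a ∈ T, ∀ b ∈ T.erase a, SepPair d a b) ∧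
        (∀ pc ∈ S, ∃ pc' ∈ T, pc.1 ≤ pc'.1) := by
  classical
  intro n
  induction n using Nat.strong_induction_on with
  | _ n ih =>
    intro S hcard hconf
    by_cases hsep : ∀ a ∈ S, ∀ b ∈ S.erase a, SepPair d a b
    · exact ⟨S, rfl, hconf, hsep, fun pc hpc => ⟨pc, hpc, le_rfl⟩⟩
    · push_neg at hsep
      obtain ⟨a, ha, b, hb, hab⟩ := hsep
      have hbe : b ::ₘ (S.erase a).erase b = S.erase a := Multiset.cons_erase hb
      have hae : a ::ₘ S.erase a = S := Multiset.cons_erase ha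
      have hS : S = a ::ₘ b ::ₘ (S.erase a).erase b := by rw [hbe, hae]
      set rest := (S.erase a).erase b with hrest
      set c : Multiset M × M := (a.1 + b.1, a.2) with hc
      have haS : Conf r a := hconf a ha
      have hbS : Conf r b := hconf b (Multiset.mem_of_mem_erase hb)
      have hna : 1 ≤ Multiset.card a.1 := Multiset.card_pos.mpr haS.1
      have hnb : 1 ≤ Multiset.card b.1 := Multiset.card_pos.mpr hbS.1
      have hcc : Conf r c := by
        constructor
        · simp only [hc]; simp [haS.1]
        · intro q hqc
          have hcardc : Multiset.card c.1 = Multiset.card a.1 + Multiset.card b.1 := by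
            simp [hc]
          rw [hcardc]
          rw [SepPair, not_lt] at hab
          rcases Multiset.mem_add.mp hqc with hqa | hqb
          · have := haS.2 q hqa
            have : dist q a.2 < r (Multiset.card a.1) := this
            have hm : r (Multiset.card a.1) ≤ r (Multiset.card a.1 + Multiset.card b.1) :=
              h.r_mono hna (by omega)
            calc dist q c.2 = dist q a.2 := rfl
              _ < _ := by linarith
          · have h1 : dist q b.2 < r (Multiset.card b.1) := hbS.2 q hqb
            have h2 : dist q a.2 ≤ dist q b.2 + dist b.2 a.2 := dist_triangle _ _ _
            have h3 : dist b.2 a.2 = dist a.2 b.2 := dist_comm _ _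
            have hm : r (Multiset.card b.1) ≤
                r (Multiset.card a.1 + Multiset.card b.1 - 1) :=
              h.r_mono hnb (by omega)
            have h5 : d (Multiset.card a.1 + Multiset.card b.1) +
                r (Multiset.card a.1 + Multiset.card b.1 - 1) <
                r (Multiset.card a.1 + Multiset.card b.1) :=
              h.2.2.2.2.1 _ (by omega)
            calc dist q c.2 = dist q a.2 := rfl
              _ < _ := by linarith
      have hcardS' : Multiset.card (c ::ₘ rest) = n - 1 := by
        have : Multiset.card S = 2 + Multiset.card rest := by
          rw [hS]; simp [hrest]; ring
        simp only [Multiset.card_cons]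
        omega
      have hn2 : 2 ≤ n := by
        have : Multiset.card S = 2 + Multiset.card rest := by
          rw [hS]; simp [hrest]; ring
        omega
      obtain ⟨T, hTsum, hTconf, hTsep, hTcont⟩ := ih (n - 1) (by omega) (c ::ₘ rest) hcardS'
        (by
          intro pc hpc
          rcases Multiset.mem_cons.mp hpc with rfl | hpc
          · exact hcc
          · exact hconf pc (Multiset.mem_of_mem_erase (Multiset.mem_of_mem_erase hpc)))
      refine ⟨T, ?_, hTconf, hTsep, ?_⟩
      · rw [hTsum, hS]
        simp [hc, add_assoc]
      · intro pc hpc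
        rw [hS] at hpc
        rcases Multiset.mem_cons.mp hpc with rfl | hpc
        · obtain ⟨pc', hpc', hle⟩ := hTcont c (Multiset.mem_cons_self _ _)
          exact ⟨pc', hpc', le_trans (by simp [hc]) hle⟩
        rcases Multiset.mem_cons.mp hpc with rfl | hpc
        · obtain ⟨pc', hpc', hle⟩ := hTcont c (Multiset.mem_cons_self _ _)
          exact ⟨pc', hpc', le_trans (by simp [hc]) hle⟩
        · exact hTcont pc (Multiset.mem_cons_of_mem hpc)

end Aux

/-- Common coarsening: given two cluster decompositions `z = Σ X i = Σ Y j`, there is a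
cluster decomposition `z = Σ W k` such that every `X i` and every `Y j` is contained in
some `W k`. -/
theorem cluster_decompositions_common_coarsening {M : Type*} [MetricSpace M]
    (r d : ℕ → ℝ) (hrule : ClusteringRule r d) (z : Multiset M)
    (m : ℕ) (X : Fin m → Multiset M) (cX : Fin m → M)
    (hXsum : (∑ i, X i) = z) (hXne : ∀ i, X i ≠ 0)
    (hXconf : ∀ i, ∀ p ∈ X i, dist p (cX i) < r (X i).card)
    (hXsep : ∀ i j, i ≠ j → d ((X i).card + (X j).card) < dist (cX i) (cX j))
    (l : ℕ) (Y : Fin l → Multiset M) (cY : Fin l → M)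
    (hYsum : (∑ j, Y j) = z) (hYne : ∀ j, Y j ≠ 0)
    (hYconf : ∀ j, ∀ p ∈ Y j, dist p (cY j) < r (Y j).card)
    (hYsep : ∀ i j, i ≠ j → d ((Y i).card + (Y j).card) < dist (cY i) (cY j)) :
    ∃ (p : ℕ) (W : Fin p → Multiset M) (cW : Fin p → M),
      (∀ k, W k ≠ 0) ∧ (∑ k, W k) = z ∧
      (∀ k, ∀ q ∈ W k, dist q (cW k) < r (W k).card) ∧
      (∀ k k', k ≠ k' → d ((W k).card + (W k').card) < dist (cW k) (cW k')) ∧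
      (∀ i, ∃ k, X i ≤ W k) ∧ (∀ j, ∃ k, Y j ≤ W k) := by
  classical
  -- basic containments
  have hXlez : ∀ i, X i ≤ z := fun i =>
    hXsum ▸ Finset.single_le_sum (f := X) (fun _ _ => Multiset.zero_le _) (Finset.mem_univ i)
  have hYlez : ∀ j, Y j ≤ z := fun j =>
    hYsum ▸ Finset.single_le_sum (f := Y) (fun _ _ => Multiset.zero_le _) (Finset.mem_univ j)
  -- the laminar "maximal pieces" family
  set A : Finset (Fin m) := Finset.univ.filter (fun i => ¬∃ j, X i < Y j) with hA
  set B : Finset (Fin l) := Finset.univ.filter (fun j => ¬∃ i, Y j ≤ X i) with hB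
  set S₀ : Multiset (Multiset M × M) :=
    A.val.map (fun i => (X i, cX i)) + B.val.map (fun j => (Y j, cY j)) with hS₀
  have hS₀conf : ∀ pc ∈ S₀, Conf r pc := by
    intro pc hpc
    rw [hS₀, Multiset.mem_add] at hpc
    rcases hpc with hpc | hpc
    · obtain ⟨i, _, rfl⟩ := Multiset.mem_map.mp hpc
      exact ⟨hXne i, hXconf i⟩
    · obtain ⟨j, _, rfl⟩ := Multiset.mem_map.mp hpc
      exact ⟨hYne j, hYconf j⟩
  -- the sum of the maximal pieces is z
  have hS₀sum : (S₀.map Prod.fst).sum = z := by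
    have : (S₀.map Prod.fst).sum = (∑ i ∈ A, X i) + ∑ j ∈ B, Y j := by
      rw [hS₀]
      simp [Multiset.map_map, Function.comp]
    rw [this]
    ext q
    rw [Multiset.count_add, Multiset.count_sum', Multiset.count_sum']
    have hcX : ∑ i, Multiset.count q (X i) = Multiset.count q z := by
      rw [← Multiset.count_sum', hXsum]
    have hcY : ∑ j, Multiset.count q (Y j) = Multiset.count q z := by
      rw [← Multiset.count_sum', hYsum]
    by_cases h0 : Multiset.count q z = 0
    · have hX0 : ∀ i, Multiset.count q (X i) = 0 := by
        intro i
        have := Finset.sum_eq_zero_iff.mp (hcX.trans h0) i (Finset.mem_univ i)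
        exact this
      have hY0 : ∀ j, Multiset.count q (Y j) = 0 := by
        intro j
        exact Finset.sum_eq_zero_iff.mp (hcY.trans h0) j (Finset.mem_univ j)
      rw [h0, Finset.sum_eq_zero (fun i _ => hX0 i), Finset.sum_eq_zero (fun j _ => hY0 j)]
      rfl
    · -- there is a unique X-piece and a unique Y-piece containing q
      obtain ⟨i₀, _, hi₀⟩ := Finset.exists_ne_zero_of_sum_ne_zero (hcX.trans_ne h0)
      obtain ⟨j₀, _, hj₀⟩ := Finset.exists_ne_zero_of_sum_ne_zero (hcY.trans_ne h0)
      have hqX : q ∈ X i₀ := Multiset.count_pos.mp (Nat.pos_of_ne_zero hi₀)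
      have hqY : q ∈ Y j₀ := Multiset.count_pos.mp (Nat.pos_of_ne_zero hj₀)
      have hXother : ∀ i, i ≠ i₀ → Multiset.count q (X i) = 0 := by
        intro i hne
        rw [Multiset.count_eq_zero]
        intro hqXi
        exact disj_lemma hrule X cX hXne hXconf hXsep hne hqXi hqX
      have hYother : ∀ j, j ≠ j₀ → Multiset.count q (Y j) = 0 := by
        intro j hne
        rw [Multiset.count_eq_zero]
        intro hqYj
        exact disj_lemma hrule Y cY hYne hYconf hYsep hne hqYj hqY
      have hXc : Multiset.count q (X i₀) = Multiset.count q z := by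
        rw [← hcX, Finset.sum_eq_single i₀ (fun i _ h => hXother i h) (by simp)]
      have hYc : Multiset.count q (Y j₀) = Multiset.count q z := by
        rw [← hcY, Finset.sum_eq_single j₀ (fun j _ h => hYother j h) (by simp)]
      have hsumA : ∑ i ∈ A, Multiset.count q (X i) =
          if i₀ ∈ A then Multiset.count q z else 0 := by
        rw [← Finset.sum_ite_eq' A i₀ (fun _ => Multiset.count q z)]
        refine Finset.sum_congr rfl (fun i _ => ?_)
        by_cases hii : i = i₀
        · subst hii; simp [hXc]
        · simp [hii, hXother i hii]
      have hsumB : ∑ j ∈ B, Multiset.count q (Y j) =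
          if j₀ ∈ B then Multiset.count q z else 0 := by
        rw [← Finset.sum_ite_eq' B j₀ (fun _ => Multiset.count q z)]
        refine Finset.sum_congr rfl (fun j _ => ?_)
        by_cases hjj : j = j₀
        · subst hjj; simp [hYc]
        · simp [hjj, hYother j hjj]
      rw [hsumA, hsumB]
      -- exactly one of the two maximal pieces is counted
      have hnest : X i₀ ≤ Y j₀ ∨ Y j₀ ≤ X i₀ := by
        rcases le_total (X i₀).card (Y j₀).card with hle | hle
        · exact Or.inl (nest_lemma hrule Y cY hYne hYconf hYsep (X i₀) (cX i₀)
            (hYsum ▸ hXlez i₀) (hXconf i₀) hqX hqY hle)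
        · exact Or.inr (nest_lemma hrule X cX hXne hXconf hXsep (Y j₀) (cY j₀)
            (hXsum ▸ hYlez j₀) (hYconf j₀) hqY hqX hle)
      rcases hnest with hle | hle
      · rcases lt_or_eq_of_le hle with hlt | heq
        · -- X i₀ < Y j₀ : count the Y side only
          have hiA : i₀ ∉ A := by
            rw [hA, Finset.mem_filter]
            push_neg
            intro _
            exact ⟨j₀, hlt⟩
          have hjB : j₀ ∈ B := by
            rw [hB, Finset.mem_filter]
            refine ⟨Finset.mem_univ _, ?_⟩
            rintro ⟨i, hYX⟩
            have hqXi : q ∈ X i := Multiset.mem_of_le hYX hqY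
            by_cases hii : i = i₀
            · subst hii
              exact absurd (lt_of_lt_of_le hlt hYX) (lt_irrefl _)
            · exact disj_lemma hrule X cX hXne hXconf hXsep hii hqXi hqX
          simp [hiA, hjB]
        · -- X i₀ = Y j₀ : counted from the X side (j₀ ∈ B fails since Y j₀ ≤ X i₀)
          have hle' : Y j₀ ≤ X i₀ := le_of_eq heq.symm
          have hjB : j₀ ∉ B := by
            rw [hB, Finset.mem_filter]
            push_neg
            intro _
            exact ⟨i₀, hle'⟩
          have hiA : i₀ ∈ A := by
            rw [hA, Finset.mem_filter]
            refine ⟨Finset.mem_univ _, ?_⟩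
            rintro ⟨j, hXY⟩
            have hqYj : q ∈ Y j := Multiset.mem_of_le (le_of_lt hXY) hqX
            by_cases hjj : j = j₀
            · subst hjj
              exact absurd (lt_of_lt_of_le hXY hle') (lt_irrefl _)
            · exact disj_lemma hrule Y cY hYne hYconf hYsep hjj hqYj hqY
          simp [hiA, hjB]
      · -- Y j₀ ≤ X i₀ : counted from the X side
        have hjB : j₀ ∉ B := by
          rw [hB, Finset.mem_filter]
          push_neg
          intro _
          exact ⟨i₀, hle⟩
        have hiA : i₀ ∈ A := by
          rw [hA, Finset.mem_filter]
          refine ⟨Finset.mem_univ _, ?_⟩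
          rintro ⟨j, hXY⟩
          have hqYj : q ∈ Y j := Multiset.mem_of_le (le_of_lt hXY) hqX
          by_cases hjj : j = j₀
          · subst hjj
            exact absurd (lt_of_lt_of_le hXY hle) (lt_irrefl _)
          · exact disj_lemma hrule Y cY hYne hYconf hYsep hjj hqYj hqY
        simp [hiA, hjB]
  -- every X i and Y j is below some element of S₀
  have hS₀X : ∀ i, ∃ pc ∈ S₀, X i ≤ pc.1 := by
    intro i
    by_cases hiA : i ∈ A
    · exact ⟨(X i, cX i), by
        rw [hS₀, Multiset.mem_add]
        exact Or.inl (Multiset.mem_map.mpr ⟨i, hiA, rfl⟩), le_rfl⟩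
    · rw [hA, Finset.mem_filter] at hiA
      push_neg at hiA
      obtain ⟨j, hlt⟩ := hiA (Finset.mem_univ i)
      have hjB : j ∈ B := by
        rw [hB, Finset.mem_filter]
        refine ⟨Finset.mem_univ _, ?_⟩
        rintro ⟨i', hYX⟩
        obtain ⟨q, hq⟩ := Multiset.exists_mem_of_ne_zero (hXne i)
        have hqY : q ∈ Y j := Multiset.mem_of_le (le_of_lt hlt) hq
        have hqX' : q ∈ X i' := Multiset.mem_of_le hYX hqY
        by_cases hii : i' = i
        · subst hii
          exact absurd (lt_of_lt_of_le hlt hYX) (lt_irrefl _)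
        · exact disj_lemma hrule X cX hXne hXconf hXsep hii hqX' hq
      exact ⟨(Y j, cY j), by
        rw [hS₀, Multiset.mem_add]
        exact Or.inr (Multiset.mem_map.mpr ⟨j, hjB, rfl⟩), le_of_lt hlt⟩
  have hS₀Y : ∀ j, ∃ pc ∈ S₀, Y j ≤ pc.1 := by
    intro j
    by_cases hjB : j ∈ B
    · exact ⟨(Y j, cY j), by
        rw [hS₀, Multiset.mem_add]
        exact Or.inr (Multiset.mem_map.mpr ⟨j, hjB, rfl⟩), le_rfl⟩
    · rw [hB, Finset.mem_filter] at hjB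
      push_neg at hjB
      obtain ⟨i, hle⟩ := hjB (Finset.mem_univ j)
      have hiA : i ∈ A := by
        rw [hA, Finset.mem_filter]
        refine ⟨Finset.mem_univ _, ?_⟩
        rintro ⟨j', hXY⟩
        obtain ⟨q, hq⟩ := Multiset.exists_mem_of_ne_zero (hYne j)
        have hqX : q ∈ X i := Multiset.mem_of_le hle hq
        have hqY' : q ∈ Y j' := Multiset.mem_of_le (le_of_lt hXY) hqX
        by_cases hjj : j' = j
        · subst hjj
          exact absurd (lt_of_lt_of_le hXY hle) (lt_irrefl _)
        · exact disj_lemma hrule Y cY hYne hYconf hYsep hjj hqY' hq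
      exact ⟨(X i, cX i), by
        rw [hS₀, Multiset.mem_add]
        exact Or.inl (Multiset.mem_map.mpr ⟨i, hiA, rfl⟩), hle⟩
  -- merge non-separated pieces
  obtain ⟨T, hTsum, hTconf, hTsep, hTcont⟩ :=
    merge_lemma hrule (Multiset.card S₀) S₀ rfl hS₀conf
  -- T has no duplicates
  have hTnodup : T.Nodup := by
    rw [Multiset.nodup_iff_count_le_one]
    intro v
    by_contra hcnt
    push_neg at hcnt
    have hv : v ∈ T := Multiset.count_pos.mp (by omega)
    have hv' : v ∈ T.erase v := by
      rw [← Multiset.count_pos, Multiset.count_erase_self]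
      omega
    have hsep := hTsep v hv v hv'
    have hconfv := hTconf v hv
    have hn : 1 ≤ Multiset.card v.1 := Multiset.card_pos.mpr hconfv.1
    have h6 : 6 * r (Multiset.card v.1 + Multiset.card v.1 - 1) <
        d (Multiset.card v.1 + Multiset.card v.1) := hrule.2.2.2.2.2 _ (by omega)
    have hp0 : 0 < r (Multiset.card v.1 + Multiset.card v.1 - 1) := hrule.r_pos (by omega)
    rw [SepPair, dist_self] at hsep
    linarith
  -- package as a Fin-indexed family
  set L := T.toList with hL
  have hLT : (L : Multiset (Multiset M × M)) = T := Multiset.coe_toList T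
  have hLnodup : L.Nodup := by
    rw [← Multiset.coe_nodup, hLT]
    exact hTnodup
  have hmemL : ∀ k : Fin L.length, L.get k ∈ T := by
    intro k
    rw [← hLT]
    exact Multiset.mem_coe.mpr (L.get_mem k)
  refine ⟨L.length, fun k => (L.get k).1, fun k => (L.get k).2, ?_, ?_, ?_, ?_, ?_, ?_⟩
  · intro k
    exact (hTconf _ (hmemL k)).1
  · have h1 : ∑ k : Fin L.length, (L.get k).1 = (L.map Prod.fst).sum := by
      rw [← List.sum_ofFn]
      congr 1
      conv_rhs => rw [← List.ofFn_get L]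
      rw [List.map_ofFn]
      rfl
    rw [h1]
    have : (L.map Prod.fst : Multiset (Multiset M)) = T.map Prod.fst := by
      rw [← hLT]
      simp
    calc (L.map Prod.fst).sum = ((L.map Prod.fst : List (Multiset M)) : Multiset (Multiset M)).sum := by
          simp
      _ = (T.map Prod.fst).sum := by rw [this]
      _ = z := hTsum.trans hS₀sum
  · intro k q hq
    exact (hTconf _ (hmemL k)).2 q hq
  · intro k k' hkk
    have hne : L.get k ≠ L.get k' := by
      intro hEq
      exact hkk (List.nodup_iff_injective_get.mp hLnodup hEq)
    have hmem : L.get k' ∈ T.erase (L.get k) :=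
      (Multiset.mem_erase_of_ne hne.symm).mpr (hmemL k')
    exact hTsep _ (hmemL k) _ hmem
  · intro i
    obtain ⟨pc, hpc, hle⟩ := hS₀X i
    obtain ⟨pc', hpc', hle'⟩ := hTcont pc hpc
    obtain ⟨k, hk⟩ := List.mem_iff_get.mp (by rw [← hLT] at hpc'; exact hpc')
    exact ⟨k, by show _ ≤ (L.get k).1; rw [hk]; exact hle.trans hle'⟩
  · intro j
    obtain ⟨pc, hpc, hle⟩ := hS₀Y j
    obtain ⟨pc', hpc', hle'⟩ := hTcont pc hpc
    obtain ⟨k, hk⟩ := List.mem_iff_get.mp (by rw [← hLT] at hpc'; exact hpc')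
    exact ⟨k, by show _ ≤ (L.get k).1; rw [hk]; exact hle.trans hle'⟩
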